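/- Let R be a finite unital ring and let A be a finite R-module. Then there exists a positive integer ℓ such that for every positive integer n, all submodules B ⊆ C of A^n, and every R-linear map h : B → A that admits an R-linear extension h' : C → A (with h'(x) = h(x) for all x ∈ B), there exist an R-linear map p : A^n → A^ℓ and an R-linear map k : p(C) → A such that k(p(x)) = h(x) for all x ∈ B. -/

import Mathlib

namespace Stmt3Aux

/-- Characters of the additive group of `R`, made into a left `R`-module via
`(r • c) s = c (s * r)`. -/
def RChar (R : Type*) [Ring R] : Type _ := R →+ AddCircle (1 : ℚ)

namespace RChar

variable {R : Type*} [Ring R]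

instance : AddCommGroup (RChar R) :=
  inferInstanceAs (AddCommGroup (R →+ AddCircle (1 : ℚ)))

instance instFunLike : FunLike (RChar R) R (AddCircle (1 : ℚ)) :=
  inferInstanceAs (FunLike (R →+ AddCircle (1 : ℚ)) R (AddCircle (1 : ℚ)))

instance : AddMonoidHomClass (RChar R) R (AddCircle (1 : ℚ)) :=
  inferInstanceAs (AddMonoidHomClass (R →+ AddCircle (1 : ℚ)) R (AddCircle (1 : ℚ)))

/-- Build an `RChar` from an additive hom. -/
def mk' (f : R →+ AddCircle (1 : ℚ)) : RChar R := f

@[simp] lemma mk'_apply (f : R →+ AddCircle (1 : ℚ)) (s : R) : mk' f s = f s := rfl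

@[ext] lemma ext {c c' : RChar R} (h : ∀ s, c s = c' s) : c = c' := DFunLike.ext _ _ h

@[simp] lemma add_apply (c c' : RChar R) (s : R) : (c + c') s = c s + c' s := rfl
@[simp] lemma zero_apply (s : R) : (0 : RChar R) s = 0 := rfl

instance : SMul R (RChar R) :=
  ⟨fun r c => mk' ((show R →+ AddCircle (1 : ℚ) from c).comp (AddMonoidHom.mulRight r))⟩

@[simp] lemma smul_apply (r : R) (c : RChar R) (s : R) : (r • c) s = c (s * r) := rfl

instance : Module R (RChar R) where
  one_smul c := ext fun s => by rw [smul_apply, mul_one]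
  mul_smul r r' c := ext fun s => by
    rw [smul_apply, smul_apply, smul_apply, mul_assoc]
  smul_zero r := ext fun s => rfl
  smul_add r c c' := ext fun s => rfl
  add_smul r r' c := ext fun s => by
    rw [smul_apply, add_apply, smul_apply, smul_apply, mul_add, map_add]
  zero_smul c := ext fun s => by
    rw [smul_apply, mul_zero, map_zero, zero_apply]

end RChar

variable {R : Type*} [Ring R]

/-- Baer's criterion for a power of `RChar R`. -/
theorem baer_pi (ι : Type*) : Module.Baer R (ι → RChar R) := by
  intro I g
  have key : ∀ j : ι, ∃ ψ : R →+ AddCircle (1 : ℚ), ∀ x : I, ψ (x : R) = g x j 1 := by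
    intro j
    have hdiv : Module.Baer ℤ (AddCircle (1 : ℚ)) := Module.Baer.of_divisible _
    let φ : I →+ AddCircle (1 : ℚ) :=
      { toFun := fun x => g x j 1
        map_zero' := by show (g 0 j) 1 = 0; rw [map_zero g]; rfl
        map_add' := fun x y => by
          show (g (x + y) j) 1 = (g x j) 1 + (g y j) 1
          rw [map_add g]; rfl }
    obtain ⟨ψ, hψ⟩ := hdiv.extension_property_addMonoidHom
      (I.subtype.toAddMonoidHom) (fun x y hxy => Subtype.ext hxy) φ
    exact ⟨ψ, fun x => DFunLike.congr_fun hψ x⟩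
  choose ψ hψ using key
  refine ⟨{ toFun := fun r j => RChar.mk' ((ψ j).comp (AddMonoidHom.mulRight r))
            map_add' := fun r r' => funext fun j => RChar.ext fun s => by
              show ψ j (s * (r + r')) = ψ j (s * r) + ψ j (s * r')
              rw [mul_add, map_add]
            map_smul' := fun t r => funext fun j => RChar.ext fun s => by
              show ψ j (s * (t * r)) = ψ j ((s * t) * r)
              rw [mul_assoc] }, ?_⟩
  intro x mem
  funext j
  apply RChar.ext
  intro s
  have hmem : s * x ∈ I := I.mul_mem_left s mem
  have h1 : ψ j (s * x) = g ⟨s * x, hmem⟩ j 1 := hψ j ⟨s * x, hmem⟩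
  have h2 : (⟨s * x, hmem⟩ : I) = s • (⟨x, mem⟩ : I) := rfl
  show ψ j (s * x) = g ⟨x, mem⟩ j s
  rw [h1, h2, map_smul]
  show g ⟨x, mem⟩ j (1 * s) = g ⟨x, mem⟩ j s
  rw [one_mul]

/-- Separation of points of any `R`-module by linear maps into `RChar R`. -/
theorem exists_rchar (A : Type*) [AddCommGroup A] [Module R A] {a : A} (ha : a ≠ 0) :
    ∃ f : A →ₗ[R] RChar R, f a 1 ≠ 0 := by
  obtain ⟨χ, hχ⟩ := CharacterModule.exists_character_apply_ne_zero_of_ne_zero ha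
  let mkf : A → RChar R := fun x => RChar.mk'
    { toFun := fun s => χ (s • x)
      map_zero' := by show χ ((0 : R) • x) = 0; rw [zero_smul]; exact map_zero χ
      map_add' := fun s s' => by
        show χ ((s + s') • x) = χ (s • x) + χ (s' • x)
        rw [add_smul]; exact map_add χ _ _ }
  let f : A →ₗ[R] RChar R :=
    { toFun := mkf
      map_add' := fun x y => RChar.ext fun s => by
        show χ (s • (x + y)) = χ (s • x) + χ (s • y)
        rw [smul_add, map_add]
      map_smul' := fun r x => RChar.ext fun s => by
        show χ (s • (r • x)) = χ ((s * r) • x)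
        rw [smul_smul] }
  refine ⟨f, ?_⟩
  show χ ((1 : R) • a) ≠ 0
  rwa [one_smul]

lemma coe_eq_coe_addCircle {a b : ℚ} (z : ℤ) (hz : a - b = z) :
    (a : AddCircle (1 : ℚ)) = (b : AddCircle (1 : ℚ)) := by
  have h0 : ((a - b : ℚ) : AddCircle (1 : ℚ)) = 0 := by
    rw [AddCircle.coe_eq_zero_iff]
    exact ⟨z, by rw [zsmul_eq_mul, mul_one, hz]⟩
  have : (a : AddCircle (1 : ℚ)) = ((b + (a - b) : ℚ) : AddCircle (1 : ℚ)) := by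
    norm_num
  rw [this, AddCircle.coe_add, h0, add_zero]

lemma finite_torsion (N : ℕ) (hN : N ≠ 0) :
    Finite {x : AddCircle (1 : ℚ) // N • x = 0} := by
  haveI : NeZero N := ⟨hN⟩
  have hNQ : (N : ℚ) ≠ 0 := Nat.cast_ne_zero.mpr hN
  refine Finite.of_surjective
    (fun m : ZMod N => (⟨(((m.val : ℚ) / N : ℚ) : AddCircle (1 : ℚ)), ?_⟩ :
      {x : AddCircle (1 : ℚ) // N • x = 0})) ?_
  · rw [← AddCircle.coe_nsmul, AddCircle.coe_eq_zero_iff]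
    refine ⟨(m.val : ℤ), ?_⟩
    rw [zsmul_eq_mul, mul_one, nsmul_eq_mul]
    push_cast
    field_simp
  · rintro ⟨x, hx⟩
    obtain ⟨q, rfl⟩ := QuotientAddGroup.mk_surjective x
    rw [show (QuotientAddGroup.mk q : AddCircle (1 : ℚ)) = (q : AddCircle (1 : ℚ)) from rfl,
      ← AddCircle.coe_nsmul, AddCircle.coe_eq_zero_iff] at hx
    obtain ⟨z, hz⟩ := hx
    rw [zsmul_eq_mul, mul_one, nsmul_eq_mul] at hz
    refine ⟨(z : ZMod N), Subtype.ext ?_⟩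
    show ((((z : ZMod N).val : ℚ) / N : ℚ) : AddCircle (1 : ℚ)) = _
    refine coe_eq_coe_addCircle (-(z / N)) ?_
    have hq : q = (z : ℚ) / N := by field_simp [hz]; linarith
    have hval : (((z : ZMod N).val : ℤ)) = z % N := ZMod.val_intCast z
    have hmod : ((z % N : ℤ) : ℚ) = (z : ℚ) - (N : ℚ) * ((z / N : ℤ) : ℚ) := by
      have h3 := Int.mul_ediv_add_emod z N
      have h4 := congrArg (fun t : ℤ => (t : ℚ)) h3
      push_cast at h4
      linarith
    have hvq : (((z : ZMod N).val : ℕ) : ℚ) = (z : ℚ) - (N : ℚ) * ((z / N : ℤ) : ℚ) := by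
      rw [← hmod]; exact_mod_cast congrArg (Int.cast : ℤ → ℚ) hval
    rw [hq, hvq]
    push_cast
    field_simp
    ring

lemma finite_rchar [Fintype R] : Finite (RChar R) := by
  set N := Fintype.card R with hNdef
  have hN : N ≠ 0 := Fintype.card_ne_zero
  haveI := finite_torsion N hN
  refine Finite.of_injective
    (fun c : RChar R => fun r : R =>
      (⟨c r, ?_⟩ : {x : AddCircle (1 : ℚ) // N • x = 0})) ?_
  · rw [← map_nsmul]
    have : (N • r : R) = 0 := card_nsmul_eq_zero
    rw [this, map_zero]
  · intro c c' hcc'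
    apply RChar.ext
    intro s
    have := congrFun hcc' s
    exact congrArg Subtype.val this

end Stmt3Aux

open Stmt3Aux in
/-- For a finite ring `R` and finite `R`-module `A`, there is a
positive integer `ℓ` such that for all submodules `B ≤ C ≤ Aⁿ` and every
`R`-linear map `h : B → A` admitting an `R`-linear extension `h' : C → A`,
there are `p : Aⁿ →ₗ A^ℓ` and `k : p(C) →ₗ A` with `k(p(x)) = h(x)` for all
`x ∈ B`. -/
theorem stmt_3
    (R : Type*) [Ring R] [Fintype R]
    (A : Type*) [AddCommGroup A] [Module R A] [Fintype A] :
    ∃ ℓ : ℕ, 0 < ℓ ∧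
      ∀ (n : ℕ), 0 < n →
        ∀ (B C : Submodule R (Fin n → A)) (hBC : B ≤ C)
          (h : B →ₗ[R] A) (h' : C →ₗ[R] A),
          (∀ (x : Fin n → A) (hx : x ∈ B), h' ⟨x, hBC hx⟩ = h ⟨x, hx⟩) →
          ∃ (p : (Fin n → A) →ₗ[R] (Fin ℓ → A))
            (g : (C.map p) →ₗ[R] A),
            ∀ (x : Fin n → A) (hx : x ∈ B),
              g ⟨p x, Submodule.mem_map_of_mem (hBC hx)⟩ = h ⟨x, hx⟩ := by
  classical
  -- the "big" finite module
  set Q := (A → RChar R) with hQdef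
  haveI : Finite (RChar R) := finite_rchar
  haveI : Finite Q := by infer_instance
  set T := (A →ₗ[R] Q) with hTdef
  haveI : Finite T := Finite.of_injective (fun f : T => (f : A → Q)) DFunLike.coe_injective
  haveI : Nonempty T := ⟨0⟩
  set ℓ := Nat.card T with hℓdef
  have hℓpos : 0 < ℓ := Nat.card_pos
  -- the separating embedding e : A →ₗ Q
  have sepex : ∀ a : A, ∃ f : A →ₗ[R] RChar R, a ≠ 0 → f a 1 ≠ 0 := by
    intro a
    by_cases ha : a = 0
    · exact ⟨0, fun hcon => absurd ha hcon⟩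
    · obtain ⟨f, hf⟩ := exists_rchar (R := R) A ha
      exact ⟨f, fun _ => hf⟩
  choose sep hsep using sepex
  set e : A →ₗ[R] Q := LinearMap.pi sep with hedef
  have einj : Function.Injective e := by
    intro x y hxy
    by_contra hne
    have hsub : x - y ≠ 0 := sub_ne_zero.mpr hne
    have h0 : e (x - y) = 0 := by rw [map_sub, hxy, sub_self]
    have := congrFun h0 (x - y)
    rw [LinearMap.pi_apply] at this
    exact hsep (x - y) hsub (by rw [this]; rfl)
  refine ⟨ℓ, hℓpos, ?_⟩
  intro n hn B C hBC h h' hcomp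
  -- extend e ∘ h' along C ↪ Aⁿ using Baer's criterion
  obtain ⟨H, hH⟩ := (baer_pi (R := R) A).extension_property
    C.subtype (Submodule.injective_subtype C) (e ∘ₗ h')
  have hHc : ∀ c : C, H (c : Fin n → A) = e (h' c) := by
    intro c
    have := DFunLike.congr_fun hH c
    rwa [LinearMap.comp_apply, LinearMap.comp_apply] at this
  -- decompose H into coordinates
  set gi : Fin n → T := fun i => H ∘ₗ LinearMap.single R (fun _ : Fin n => A) i with hgidef
  have hHsum : ∀ x : Fin n → A, H x = ∑ i, gi i (x i) := by
    intro x
    conv_lhs => rw [← Finset.univ_sum_single x, map_sum]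
    rfl
  -- the compression p and the map q with q ∘ p = H
  set ε : Fin ℓ ≃ T := (Finite.equivFin T).symm with hεdef
  set p : (Fin n → A) →ₗ[R] (Fin ℓ → A) :=
    LinearMap.pi (fun j => ∑ i ∈ Finset.univ.filter (fun i => ε.symm (gi i) = j),
      LinearMap.proj i) with hpdef
  set q : (Fin ℓ → A) →ₗ[R] Q :=
    ∑ j, (ε j) ∘ₗ LinearMap.proj j with hqdef
  have hqp : ∀ x : Fin n → A, q (p x) = H x := by
    intro x
    rw [hHsum]
    rw [hqdef, LinearMap.sum_apply]
    have hpxj : ∀ j, p x j = ∑ i ∈ Finset.univ.filter (fun i => ε.symm (gi i) = j), x i := by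
      intro j
      rw [hpdef, LinearMap.pi_apply, LinearMap.sum_apply]
      rfl
    calc ∑ j, ((ε j) ∘ₗ LinearMap.proj j) (p x)
        = ∑ j, ε j (p x j) := rfl
      _ = ∑ j, ∑ i ∈ Finset.univ.filter (fun i => ε.symm (gi i) = j), ε j (x i) := by
          refine Finset.sum_congr rfl fun j _ => ?_
          rw [hpxj j, map_sum]
      _ = ∑ j, ∑ i ∈ Finset.univ.filter (fun i => ε.symm (gi i) = j), gi i (x i) := by
          refine Finset.sum_congr rfl fun j _ => Finset.sum_congr rfl fun i hi => ?_
          rw [Finset.mem_filter] at hi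
          rw [← hi.2, Equiv.apply_symm_apply]
      _ = ∑ i, gi i (x i) :=
          Finset.sum_fiberwise Finset.univ (fun i => ε.symm (gi i)) (fun i => gi i (x i))
  -- now build g on C.map p
  set ψ : C →ₗ[R] (Fin ℓ → A) := p ∘ₗ C.subtype with hψdef
  have hrange : LinearMap.range ψ = C.map p := by
    rw [hψdef, LinearMap.range_comp, Submodule.range_subtype]
  have hker : LinearMap.ker ψ ≤ LinearMap.ker h' := by
    intro c hc
    rw [LinearMap.mem_ker] at hc ⊢
    have h1 : e (h' c) = 0 := by
      rw [← hHc c, ← hqp (c : Fin n → A)]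
      have : p (c : Fin n → A) = ψ c := rfl
      rw [this, hc, map_zero]
    have : e (h' c) = e 0 := by rw [h1, map_zero]
    exact einj this
  set lift : (C ⧸ LinearMap.ker ψ) →ₗ[R] A := (LinearMap.ker ψ).liftQ h' hker with hliftdef
  set g : (C.map p) →ₗ[R] A :=
    (lift ∘ₗ (ψ.quotKerEquivRange.symm : LinearMap.range ψ →ₗ[R] C ⧸ LinearMap.ker ψ)) ∘ₗ
      (LinearEquiv.ofEq _ _ hrange.symm : (C.map p) →ₗ[R] LinearMap.range ψ) with hgdef
  refine ⟨p, g, ?_⟩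
  intro x hx
  set c : C := ⟨x, hBC hx⟩ with hcdef
  have e1 : (LinearEquiv.ofEq _ _ hrange.symm : (C.map p) →ₗ[R] LinearMap.range ψ)
      ⟨p x, Submodule.mem_map_of_mem (hBC hx)⟩ = ⟨ψ c, LinearMap.mem_range_self ψ c⟩ :=
    Subtype.ext rfl
  rw [hgdef, LinearMap.comp_apply, e1, LinearMap.comp_apply]
  have e2 : (ψ.quotKerEquivRange.symm : LinearMap.range ψ →ₗ[R] C ⧸ LinearMap.ker ψ)
      ⟨ψ c, LinearMap.mem_range_self ψ c⟩ = Submodule.Quotient.mk c :=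
    ψ.quotKerEquivRange_symm_apply_image c (LinearMap.mem_range_self ψ c)
  rw [e2, hliftdef, Submodule.liftQ_apply]
  exact hcomp x hx
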